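/- Fix k ≥ 2 and suppose all vertex weights are strictly positive and that for every j = 1,…,m−k+1 the subpath P_j := P_{j,j+k−1} has the same length l, i.e. d(p(j),p(j+k−1)) = l. Then the minimum of S̄ over all positions is attained at an extreme position: min_{1 ≤ j ≤ m−k+1} S̄(P_j) = min( S̄(P_1), S̄(P_{m−k+1}) ). -/

import Mathlib

open scoped ENNReal

noncomputable section

/-- A finite tree with positive edge lengths, nonnegative vertex weights,
and a positive cruising speed. -/
structure WeightedTree (V : Type*) [Fintype V] where
  G : SimpleGraph V
  isTree : G.IsTree
  len : Sym2 V → ℝ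
  len_pos : ∀ e ∈ G.edgeSet, 0 < len e
  w : V → ℝ
  w_nonneg : ∀ v, 0 ≤ w v
  vt : ℝ
  vt_pos : 0 < vt

namespace WeightedTree

variable {V : Type*} [Fintype V] [DecidableEq V] (T : WeightedTree V)

/-- `d x y`: the length of the unique path between `x` and `y`. -/
def d (x y : V) : ℝ :=
  (((T.isTree.existsUnique_path x y).choose).edges.map T.len).sum

/-- The closest vertex of the list `l` (the vertex sequence of a path) to `v`. -/
def closest (l : List V) (v : V) : V :=
  if h : ∃ u ∈ l, ∀ u' ∈ l, T.d u v ≤ T.d u' v then h.choose else v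

/-- `d(P,v)`: the distance from the path with vertex sequence `l` to `v`. -/
def dP (l : List V) (v : V) : ℝ := T.d (T.closest l v) v

/-- The weight of the branch of the vertex `q` with respect to the path with
vertex sequence `l`: the total weight of all vertices whose closest vertex on
the path is `q`. -/
def wBranch (l : List V) (q : V) : ℝ :=
  ∑ v ∈ Finset.univ.filter (fun v => T.closest l v = q), T.w v

/-- `w(T)`: total weight of the tree. -/
def wT : ℝ := ∑ v, T.w v

/-- `d̄_P(û,p) = ∑_j w_{T_{p(j)}} d(p(j), p)` for the path with vertex sequence `l`. -/
def dbar (l : List V) (p : V) : ℝ := (l.map (fun q => T.wBranch l q * T.d q p)).sum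

/-- `s_p(P) = (1/vt) d̄_P(û,p)` for a vertex `p` of the path. -/
def sOn (l : List V) (p : V) : ℝ := (1 / T.vt) * T.dbar l p

/-- `s_i(P) = (1/vt) d̄_P(û,p(i))`, where `p(i)` is the closest vertex of the path to `v_i`. -/
def s (l : List V) (v : V) : ℝ := T.sOn l (T.closest l v)

/-- Mean service time `S̄(P)`. -/
def Sbar (l : List V) : ℝ := ∑ v, T.w v * T.s l v

/-- Second moment `S̄²(P)` of the service time. -/
def S2bar (l : List V) : ℝ := ∑ v, T.w v * (T.s l v) ^ 2

/-- `T̄1(P) = (1/vt) ∑ w_i d(P, v_i)`. -/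
def T1 (l : List V) : ℝ := (1 / T.vt) * ∑ v, T.w v * T.dP l v

/-- `T̄2(P) = (1/vt) ∑ w_i d̄_P(û, p(i))`. -/
def T2 (l : List V) : ℝ := (1 / T.vt) * ∑ v, T.w v * T.dbar l (T.closest l v)

/-- The M/G/1 queueing delay `Q̄(P)`, valued in `[0,∞]`. -/
def Qbar (lam : ℝ) (l : List V) : ℝ≥0∞ :=
  if 0 < 1 - lam * T.Sbar l then
    ENNReal.ofReal (lam * T.S2bar l / (2 * (1 - lam * T.Sbar l)))
  else ⊤

/-- The M/G/1 queueing delay `Q̄(P)` as an extended real. -/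
def QbarE (lam : ℝ) (l : List V) : EReal :=
  if 0 < 1 - lam * T.Sbar l then
    ((lam * T.S2bar l / (2 * (1 - lam * T.Sbar l)) : ℝ) : EReal)
  else ⊤

/-- `|P|`: the total length of the path `P`. -/
def plen {a b : V} (P : T.G.Walk a b) : ℝ := (P.edges.map T.len).sum

/-- The objective `F(P) = α1·|P| + α2·(β·(Q̄(P)+T̄2(P)) + (1-β)·T̄1(P))`. -/
def F (α1 α2 β lam : ℝ) {a b : V} (P : T.G.Walk a b) : EReal :=
  ((α1 * T.plen P : ℝ) : EReal) +
    (α2 : EReal) *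
      ((β : EReal) * (T.QbarE lam P.support + ((T.T2 P.support : ℝ) : EReal)) +
        (((1 - β) * T.T1 P.support : ℝ) : EReal))

end WeightedTree

/-- The vertex sequence `p(a), p(a+1), …, p(b)` of the subpath `P_{a,b}` of the path
with consecutive vertices `p(1), …, p(m)`. -/
def seg {V : Type*} (p : ℕ → V) (a b : ℕ) : List V :=
  (List.range (b + 1 - a)).map (fun i => p (a + i))


set_option linter.unusedSectionVars false
set_option maxHeartbeats 1000000

namespace WeightedTree

variable {V : Type*} [Fintype V] [DecidableEq V] (T : WeightedTree V)

def plen' {a b : V} (P : T.G.Walk a b) : ℝ := (P.edges.map T.len).sum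

lemma plen'_append {a b c : V} (P : T.G.Walk a b) (Q : T.G.Walk b c) :
    T.plen' (P.append Q) = T.plen' P + T.plen' Q := by
  simp [plen', SimpleGraph.Walk.edges_append]

lemma plen'_nonneg {a b : V} (P : T.G.Walk a b) : 0 ≤ T.plen' P := by
  apply List.sum_nonneg
  intro x hx
  obtain ⟨e, he, rfl⟩ := List.mem_map.mp hx
  exact le_of_lt (T.len_pos e (P.edges_subset_edgeSet he))

lemma d_eq_plen' {x y : V} (Q : T.G.Walk x y) (h : Q.IsPath) : T.d x y = T.plen' Q := by
  have hs := (T.isTree.existsUnique_path x y).choose_spec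
  have : Q = (T.isTree.existsUnique_path x y).choose := hs.2 Q h
  rw [d, ← this]; rfl

lemma d_self (x : V) : T.d x x = 0 := by
  rw [T.d_eq_plen' SimpleGraph.Walk.nil SimpleGraph.Walk.IsPath.nil]
  simp [plen']

lemma d_comm (x y : V) : T.d x y = T.d y x := by
  have hs := (T.isTree.existsUnique_path x y).choose_spec
  rw [T.d_eq_plen' _ hs.1, T.d_eq_plen' _ hs.1.reverse]
  simp [plen', SimpleGraph.Walk.edges_reverse]

lemma d_nonneg (x y : V) : 0 ≤ T.d x y := by
  have hs := (T.isTree.existsUnique_path x y).choose_spec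
  rw [T.d_eq_plen' _ hs.1]; exact T.plen'_nonneg _

lemma plen'_pos {x y : V} (hxy : x ≠ y) (Q : T.G.Walk x y) : 0 < T.plen' Q := by
  cases Q with
  | nil => exact absurd rfl hxy
  | cons h q =>
    rw [show SimpleGraph.Walk.cons h q = (SimpleGraph.Walk.cons h SimpleGraph.Walk.nil).append q
        from rfl, plen'_append]
    have h1 : 0 < T.plen' (SimpleGraph.Walk.cons h SimpleGraph.Walk.nil) := by
      simp [plen']
      exact T.len_pos _ ((SimpleGraph.mem_edgeSet _).mpr h)
    linarith [T.plen'_nonneg q]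

lemma d_pos {x y : V} (hxy : x ≠ y) : 0 < T.d x y := by
  have hs := (T.isTree.existsUnique_path x y).choose_spec
  rw [T.d_eq_plen' _ hs.1]; exact T.plen'_pos hxy _

/-- additivity of `d` along a path -/
lemma d_add {x y u : V} (Q : T.G.Walk x y) (hQ : Q.IsPath) (hu : u ∈ Q.support) :
    T.d x u + T.d u y = T.d x y := by
  rw [T.d_eq_plen' _ hQ, ← Q.take_spec hu, plen'_append,
    T.d_eq_plen' _ (hQ.takeUntil hu), T.d_eq_plen' _ (hQ.dropUntil hu)]

lemma isPath_append {x y z : V} (P : T.G.Walk x y) (Q : T.G.Walk y z)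
    (hP : P.IsPath) (hQ : Q.IsPath) (hmeet : ∀ u ∈ P.support, u ∈ Q.support → u = y) :
    (P.append Q).IsPath := by
  apply SimpleGraph.Walk.IsPath.mk'
  rw [SimpleGraph.Walk.support_append]
  apply List.Nodup.append hP.support_nodup
  · have := hQ.support_nodup
    rw [Q.support_eq_cons] at this
    exact this.of_cons
  · intro u huP huQ
    have : u = y := hmeet u huP (List.mem_of_mem_tail huQ)
    subst this
    have := hQ.support_nodup
    rw [Q.support_eq_cons] at this
    exact (List.nodup_cons.mp this).1 huQ

end WeightedTree

namespace WeightedTree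

variable {V : Type*} [Fintype V] [DecidableEq V] (T : WeightedTree V)

lemma gate_aux {x y : V} (P : T.G.Walk x y) {v z : V} (R : T.G.Walk v z)
    (hR : R.IsPath) (hz : z ∈ P.support) :
    ∃ c ∈ P.support, ∃ Q : T.G.Walk v c, Q.IsPath ∧ Q.support ⊆ R.support ∧
      (∀ u ∈ Q.support, u ∈ P.support → u = c) := by
  induction R with
  | nil =>
    exact ⟨_, hz, SimpleGraph.Walk.nil, SimpleGraph.Walk.IsPath.nil, by simp, by
      intro u hu huP
      simpa using hu⟩
  | @cons a b z' hadj R' ih =>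
    rename_i hR hz
    by_cases hv : a ∈ P.support
    · exact ⟨a, hv, SimpleGraph.Walk.nil, SimpleGraph.Walk.IsPath.nil, by simp, by simp⟩
    · obtain ⟨c, hc, Q', hQ'path, hQ'sub, hQ'meet⟩ := ih hR.of_cons hz
      refine ⟨c, hc, SimpleGraph.Walk.cons hadj Q', ?_, ?_, ?_⟩
      · apply hQ'path.cons
        intro hmem
        exact ((SimpleGraph.Walk.cons_isPath_iff _ _).mp hR).2 (hQ'sub hmem)
      · intro u hu
        rw [SimpleGraph.Walk.support_cons] at hu ⊢
        rcases List.mem_cons.mp hu with h | h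
        · simp [h]
        · exact List.mem_cons_of_mem _ (hQ'sub h)
      · intro u hu huP
        rw [SimpleGraph.Walk.support_cons] at hu
        rcases List.mem_cons.mp hu with h | h
        · exact absurd (h ▸ huP) hv
        · exact hQ'meet u h huP

lemma exists_path_within {x y u u' : V} (P : T.G.Walk x y) (hP : P.IsPath)
    (hu : u ∈ P.support) (hu' : u' ∈ P.support) :
    ∃ M : T.G.Walk u u', M.IsPath ∧ M.support ⊆ P.support := by
  by_cases h : u' ∈ (P.dropUntil u hu).support
  · refine ⟨(P.dropUntil u hu).takeUntil u' h, (hP.dropUntil hu).takeUntil h, ?_⟩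
    exact fun z hz => P.support_dropUntil_subset hu
      (((P.dropUntil u hu).support_takeUntil_subset h) hz)
  · have h2 : u' ∈ (P.takeUntil u hu).support := by
      have := hu'
      rw [← P.take_spec hu, SimpleGraph.Walk.mem_support_append_iff] at this
      rcases this with h1 | h1
      · exact h1
      · exact absurd h1 h
    refine ⟨((P.takeUntil u hu).dropUntil u' h2).reverse,
      ((hP.takeUntil hu).dropUntil h2).reverse, ?_⟩
    intro z hz
    rw [SimpleGraph.Walk.support_reverse, List.mem_reverse] at hz
    exact P.support_takeUntil_subset hu
      (((P.takeUntil u hu).support_dropUntil_subset h2) hz)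

lemma exists_gate {x y : V} (P : T.G.Walk x y) (hP : P.IsPath) (v : V) :
    ∃ c ∈ P.support, ∀ u ∈ P.support, T.d v u = T.d v c + T.d c u := by
  have hs := (T.isTree.existsUnique_path v x).choose_spec
  obtain ⟨c, hc, Q, hQpath, _, hQmeet⟩ :=
    T.gate_aux P (T.isTree.existsUnique_path v x).choose hs.1 P.start_mem_support
  refine ⟨c, hc, fun u hu => ?_⟩
  obtain ⟨M, hMpath, hMsub⟩ := T.exists_path_within P hP hc hu
  have happ : (Q.append M).IsPath :=
    T.isPath_append Q M hQpath hMpath fun z hzQ hzM => hQmeet z hzQ (hMsub hzM)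
  rw [T.d_eq_plen' _ happ, plen'_append, T.d_eq_plen' _ hQpath, T.d_eq_plen' _ hMpath]

end WeightedTree

namespace WeightedTree

variable {V : Type*} [Fintype V] [DecidableEq V] (T : WeightedTree V)

lemma support_dropUntil_eq {x y u : V} (Q : T.G.Walk x y) (hQ : Q.IsPath)
    (hu : u ∈ Q.support) {n : ℕ} (hn : n < Q.support.length)
    (hgn : Q.support[n] = u) :
    (Q.dropUntil u hu).support = Q.support.drop n := by
  set A := (Q.takeUntil u hu).support with hA
  set B := (Q.dropUntil u hu).support with hB
  have hAB : Q.support = A ++ B.tail := by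
    conv_lhs => rw [← Q.take_spec hu]
    exact SimpleGraph.Walk.support_append _ _
  have hBu : B = u :: B.tail := SimpleGraph.Walk.support_eq_cons _
  have hAne : A ≠ [] := SimpleGraph.Walk.support_ne_nil _
  have hAlast : A.getLast hAne = u := SimpleGraph.Walk.getLast_support _
  have hAsplit : A = A.dropLast ++ [u] := by
    conv_lhs => rw [← List.dropLast_append_getLast hAne]
    rw [hAlast]
  have hS : Q.support = A.dropLast ++ B := by
    rw [hAB, hBu]
    conv_lhs => rw [hAsplit]
    rw [List.append_assoc]
    rfl
  have hklt : A.dropLast.length < Q.support.length := by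
    rw [hS, List.length_append, hBu]
    simp
  have hk : Q.support[A.dropLast.length]'hklt = u := by
    rw [List.getElem_of_eq hS]
    rw [List.getElem_append_right (Nat.le_refl _)]
    simp only [Nat.sub_self]
    rw [List.getElem_of_eq hBu]
    simp
  have hnk : n = A.dropLast.length := by
    have hnodup := hQ.support_nodup
    exact hnodup.getElem_inj_iff.mp (by rw [hgn, hk])
  rw [hnk, hS, List.drop_left]

section PathData

variable {x y : V} {W : T.G.Walk x y} {m : ℕ} {p : ℕ → V}

/-- `D a = d(x, p a)`. -/
def DD (p : ℕ → V) (x : V) (a : ℕ) : ℝ := T.d x (p a)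

lemma support_length (hsupp : W.support = (List.range m).map (fun j => p (j + 1))) :
    W.support.length = m := by rw [hsupp]; simp

lemma support_getElem (hsupp : W.support = (List.range m).map (fun j => p (j + 1)))
    {i : ℕ} (hi : i < m) :
    W.support[i]'(by rw [T.support_length hsupp]; exact hi) = p (i + 1) := by
  have : W.support[i]'(by rw [T.support_length hsupp]; exact hi)
      = ((List.range m).map (fun j => p (j + 1)))[i]'(by simpa using hi) := by
    congr 1 <;> simp [hsupp]
  rw [this]
  simp

lemma mem_support_of_le (hsupp : W.support = (List.range m).map (fun j => p (j + 1)))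
    {a : ℕ} (ha1 : 1 ≤ a) (ham : a ≤ m) : p a ∈ W.support := by
  have h1 : a - 1 < m := by omega
  have := T.support_getElem hsupp h1
  rw [show a - 1 + 1 = a by omega] at this
  exact this ▸ List.getElem_mem _

lemma p_injOn (hW : W.IsPath) (hsupp : W.support = (List.range m).map (fun j => p (j + 1)))
    {a b : ℕ} (ha1 : 1 ≤ a) (ham : a ≤ m) (hb1 : 1 ≤ b) (hbm : b ≤ m)
    (hab : p a = p b) : a = b := by
  have h1 : a - 1 < m := by omega
  have h2 : b - 1 < m := by omega
  have e1 := T.support_getElem hsupp h1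
  have e2 := T.support_getElem hsupp h2
  rw [show a - 1 + 1 = a by omega] at e1
  rw [show b - 1 + 1 = b by omega] at e2
  have e3 := e1.trans (hab.trans e2.symm)
  have := hW.support_nodup.getElem_inj_iff.mp e3
  omega

lemma d_split (hW : W.IsPath) (hsupp : W.support = (List.range m).map (fun j => p (j + 1)))
    {a b : ℕ} (ha1 : 1 ≤ a) (hab : a ≤ b) (hbm : b ≤ m) :
    T.d x (p a) + T.d (p a) (p b) = T.d x (p b) := by
  have hpa := T.mem_support_of_le hsupp ha1 (le_trans hab hbm)
  have hpb := T.mem_support_of_le hsupp (le_trans ha1 hab) hbm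
  have ha1' : a - 1 < m := by omega
  have hgeta : W.support[a-1]'(by rw [T.support_length hsupp]; omega) = p a := by
    have := T.support_getElem hsupp ha1'
    rwa [show a - 1 + 1 = a by omega] at this
  have hdrop := T.support_dropUntil_eq W hW hpa (n := a - 1)
    (by rw [T.support_length hsupp]; omega) hgeta
  have hpbQ : p b ∈ (W.dropUntil (p a) hpa).support := by
    rw [hdrop]
    have hlt : b - a < (W.support.drop (a-1)).length := by
      rw [List.length_drop, T.support_length hsupp]; omega
    have : (W.support.drop (a-1))[b-a]'hlt = p b := by
      rw [List.getElem_drop]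
      have : a - 1 + (b - a) = b - 1 := by omega
      simp_rw [this]
      have := T.support_getElem hsupp (show b - 1 < m by omega)
      rwa [show b - 1 + 1 = b by omega] at this
    exact this ▸ List.getElem_mem _
  have h1 := T.d_add W hW hpa
  have h2 := T.d_add _ (hW.dropUntil hpa) hpbQ
  have h3 := T.d_add W hW hpb
  linarith

end PathData

end WeightedTree

namespace WeightedTree

variable {V : Type*} [Fintype V] [DecidableEq V] (T : WeightedTree V)
variable {x y : V} {W : T.G.Walk x y} {m : ℕ} {p : ℕ → V}

lemma d_eq_sub (hW : W.IsPath) (hsupp : W.support = (List.range m).map (fun j => p (j + 1)))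
    {a b : ℕ} (ha1 : 1 ≤ a) (hab : a ≤ b) (hbm : b ≤ m) :
    T.d (p a) (p b) = T.d x (p b) - T.d x (p a) := by
  linarith [T.d_split hW hsupp ha1 hab hbm]

lemma D_mono (hW : W.IsPath) (hsupp : W.support = (List.range m).map (fun j => p (j + 1)))
    {a b : ℕ} (ha1 : 1 ≤ a) (hab : a ≤ b) (hbm : b ≤ m) :
    T.d x (p a) ≤ T.d x (p b) := by
  have := T.d_eq_sub hW hsupp ha1 hab hbm
  have h2 := T.d_nonneg (p a) (p b)
  linarith

lemma D_strict (hW : W.IsPath) (hsupp : W.support = (List.range m).map (fun j => p (j + 1)))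
    {a b : ℕ} (ha1 : 1 ≤ a) (hab : a < b) (hbm : b ≤ m) :
    T.d x (p a) < T.d x (p b) := by
  have := T.d_eq_sub hW hsupp ha1 (le_of_lt hab) hbm
  have hne : p a ≠ p b := fun h => by
    have := T.p_injOn hW hsupp ha1 (by omega) (by omega) hbm h; omega
  have h2 := T.d_pos hne
  linarith

lemma d_abs (hW : W.IsPath) (hsupp : W.support = (List.range m).map (fun j => p (j + 1)))
    {a b : ℕ} (ha1 : 1 ≤ a) (ham : a ≤ m) (hb1 : 1 ≤ b) (hbm : b ≤ m) :
    T.d (p a) (p b) = |T.d x (p b) - T.d x (p a)| := by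
  rcases le_total a b with h | h
  · rw [T.d_eq_sub hW hsupp ha1 h hbm, abs_of_nonneg]
    have := T.D_mono hW hsupp ha1 h hbm; linarith
  · rw [T.d_comm, T.d_eq_sub hW hsupp hb1 h ham, abs_of_nonpos]
    · ring
    · have := T.D_mono hW hsupp hb1 h ham; linarith

lemma exists_gate_idx (hW : W.IsPath)
    (hsupp : W.support = (List.range m).map (fun j => p (j + 1))) (v : V) :
    ∃ b, 1 ≤ b ∧ b ≤ m ∧ ∀ a, 1 ≤ a → a ≤ m →
      T.d v (p a) = T.d v (p b) + T.d (p b) (p a) := by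
  obtain ⟨c, hc, hprop⟩ := T.exists_gate W hW v
  rw [hsupp] at hc
  obtain ⟨i, hi, rfl⟩ := List.mem_map.mp hc
  rw [List.mem_range] at hi
  exact ⟨i + 1, by omega, by omega,
    fun a ha1 ham => hprop _ (T.mem_support_of_le hsupp ha1 ham)⟩

lemma exists_min_list (v : V) : ∀ (l : List V), l ≠ [] →
    ∃ u ∈ l, ∀ u' ∈ l, T.d u v ≤ T.d u' v := by
  intro l
  induction l with
  | nil => intro h; exact absurd rfl h
  | cons a l ih =>
    intro _
    by_cases hl : l = []
    · subst hl
      exact ⟨a, List.mem_cons_self, by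
        intro u' hu'
        rw [List.mem_singleton.mp hu']⟩
    · obtain ⟨u, hu, hmin⟩ := ih hl
      by_cases h : T.d a v ≤ T.d u v
      · refine ⟨a, List.mem_cons_self, fun u' hu' => ?_⟩
        rcases List.mem_cons.mp hu' with rfl | hu'
        · exact le_refl _
        · exact le_trans h (hmin u' hu')
      · refine ⟨u, List.mem_cons_of_mem _ hu, fun u' hu' => ?_⟩
        rcases List.mem_cons.mp hu' with rfl | hu'
        · exact le_of_not_ge h
        · exact hmin u' hu'

lemma mem_seg_iff {j e : ℕ} (u : V) :
    u ∈ seg p j e ↔ ∃ a, j ≤ a ∧ a ≤ e ∧ p a = u := by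
  unfold seg
  rw [List.mem_map]
  constructor
  · rintro ⟨i, hi, rfl⟩
    rw [List.mem_range] at hi
    by_cases hje : j ≤ e
    · exact ⟨j + i, by omega, by omega, rfl⟩
    · omega
  · rintro ⟨a, hja, hae, rfl⟩
    exact ⟨a - j, by rw [List.mem_range]; omega, by rw [show j + (a - j) = a by omega]⟩

lemma seg_ne_nil {j e : ℕ} (hje : j ≤ e) : seg p (V := V) j e ≠ [] := by
  unfold seg
  simp only [ne_eq, List.map_eq_nil_iff, List.range_eq_nil]
  omega

lemma closest_seg (hW : W.IsPath) (hsupp : W.support = (List.range m).map (fun j => p (j + 1)))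
    (v : V) {j e b : ℕ} (hj1 : 1 ≤ j) (hje : j ≤ e) (hem : e ≤ m)
    (hb1 : 1 ≤ b) (hbm : b ≤ m)
    (hgate : ∀ a, 1 ≤ a → a ≤ m → T.d v (p a) = T.d v (p b) + T.d (p b) (p a)) :
    T.closest (seg p j e) v = p (max j (min b e)) := by
  have hl : seg p (V := V) j e ≠ [] := seg_ne_nil hje
  have hex : ∃ u ∈ seg p j e, ∀ u' ∈ seg p j e, T.d u v ≤ T.d u' v :=
    T.exists_min_list v _ hl
  rw [closest, dif_pos hex]
  obtain ⟨hmem, hmin⟩ := hex.choose_spec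
  obtain ⟨a, hja, hae, hpa⟩ := (mem_seg_iff _).mp hmem
  set cl := max j (min b e) with hcl
  have hjcl : j ≤ cl := le_max_left _ _
  have hcle : cl ≤ e := by omega
  have hclmem : p cl ∈ seg p j e := (mem_seg_iff _).mpr ⟨cl, hjcl, hcle, rfl⟩
  have hle := hmin (p cl) hclmem
  rw [← hpa] at hle
  rw [T.d_comm (p a) v, T.d_comm (p cl) v] at hle
  rw [hgate a (by omega) (by omega), hgate cl (by omega) (by omega)] at hle
  have key : T.d (p b) (p a) ≤ T.d (p b) (p cl) := by linarith
  rw [T.d_abs hW hsupp hb1 hbm (by omega) (by omega),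
      T.d_abs hW hsupp hb1 hbm (by omega) (by omega)] at key
  have hacl : a = cl := by
    rcases lt_or_ge b j with hbj | hjb
    · have hclj : cl = j := by omega
      rw [hclj] at key
      rw [abs_of_nonneg (by have := T.D_mono hW hsupp hb1 (by omega : b ≤ a) (by omega); linarith),
          abs_of_nonneg (by have := T.D_mono hW hsupp hb1 (by omega : b ≤ j) (by omega); linarith)]
        at key
      by_contra hne
      have hlt : j < a := by omega
      have := T.D_strict hW hsupp hj1 hlt (by omega)
      linarith
    · rcases lt_or_ge e b with heb | hbe
      · have hcle' : cl = e := by omega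
        rw [hcle'] at key
        rw [abs_of_nonpos (by have := T.D_mono hW hsupp (by omega : 1 ≤ a) (by omega : a ≤ b) hbm; linarith),
            abs_of_nonpos (by have := T.D_mono hW hsupp (by omega : 1 ≤ e) (by omega : e ≤ b) hbm; linarith)]
          at key
        by_contra hne
        have hlt : a < e := by omega
        have := T.D_strict hW hsupp (by omega) hlt (by omega)
        linarith
      · have hclb : cl = b := by omega
        rw [hclb] at key
        simp only [sub_self, abs_zero] at key
        have habs := abs_nonneg (T.d x (p a) - T.d x (p b))
        have heq : T.d x (p a) = T.d x (p b) := by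
          have h2 := abs_le.mp key
          linarith [h2.1, h2.2]
        by_contra hne
        rcases lt_or_ge a b with h' | h'
        · have := T.D_strict hW hsupp (by omega) h' hbm
          linarith
        · have := T.D_strict hW hsupp hb1 (by omega : b < a) (by omega)
          linarith
  rw [← hpa, hacl]

end WeightedTree


section PureLemmas

lemma list_range_map_sum (n : ℕ) (h : ℕ → ℝ) :
    ((List.range n).map h).sum = ∑ i ∈ Finset.range n, h i := by
  induction n with
  | zero => simp
  | succ n ih =>
    rw [List.range_succ, Finset.sum_range_succ, List.map_append, List.sum_append, ih]
    simp

lemma cut_identity (B D : ℕ → ℝ) {j e : ℕ} (hje : j ≤ e)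
    (hmono : ∀ a b, j ≤ a → a ≤ b → b ≤ e → D a ≤ D b) :
    ∑ a ∈ Finset.Icc j e, ∑ b ∈ Finset.Icc j e, B a * B b * |D a - D b|
      = 2 * ∑ c ∈ Finset.Ico j e, (D (c + 1) - D c) *
          ((∑ a ∈ Finset.Icc j c, B a) * (∑ b ∈ Finset.Icc (c + 1) e, B b)) := by
  set I := Finset.Icc j e with hI
  have habs : ∀ a ∈ I, ∀ b ∈ I,
      B a * B b * |D a - D b|
        = (if a < b then B a * B b * (D b - D a) else 0)
          + (if b < a then B a * B b * (D a - D b) else 0) := by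
    intro a ha b hb
    rw [hI, Finset.mem_Icc] at ha hb
    rcases lt_trichotomy a b with h | h | h
    · rw [if_pos h, if_neg (by omega), abs_of_nonpos (by
        have := hmono a b ha.1 (le_of_lt h) hb.2; linarith)]
      ring
    · subst h
      simp
    · rw [if_neg (by omega), if_pos h, abs_of_nonneg (by
        have := hmono b a hb.1 (le_of_lt h) ha.2; linarith)]
      ring
  rw [Finset.sum_congr rfl fun a ha => Finset.sum_congr rfl fun b hb => habs a ha b hb]
  have hsplit : ∑ a ∈ I, ∑ b ∈ I,
      ((if a < b then B a * B b * (D b - D a) else 0)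
        + (if b < a then B a * B b * (D a - D b) else 0))
      = (∑ a ∈ I, ∑ b ∈ I, (if a < b then B a * B b * (D b - D a) else 0))
        + ∑ a ∈ I, ∑ b ∈ I, (if b < a then B a * B b * (D a - D b) else 0) := by
    rw [← Finset.sum_add_distrib]
    exact Finset.sum_congr rfl fun a _ => by rw [← Finset.sum_add_distrib]
  rw [hsplit]
  have hS2 : (∑ a ∈ I, ∑ b ∈ I, (if b < a then B a * B b * (D a - D b) else 0))
      = ∑ a ∈ I, ∑ b ∈ I, (if a < b then B a * B b * (D b - D a) else 0) := by
    rw [Finset.sum_comm]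
    exact Finset.sum_congr rfl fun b _ => Finset.sum_congr rfl fun a _ => by
      by_cases h : b < a
      · rw [if_pos h, if_pos h]; ring
      · rw [if_neg h, if_neg h]
  rw [hS2, ← two_mul]
  congr 1
  have step : ∀ a ∈ I, ∀ b ∈ I, (if a < b then B a * B b * (D b - D a) else 0)
      = ∑ c ∈ Finset.Ico j e,
          (if a ≤ c ∧ c < b then B a * B b * (D (c + 1) - D c) else 0) := by
    intro a ha b hb
    rw [hI, Finset.mem_Icc] at ha hb
    by_cases hab : a < b
    · rw [if_pos hab]
      have hDb : D b - D a = ∑ c ∈ Finset.Ico a b, (D (c + 1) - D c) := by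
        rw [Finset.sum_Ico_eq_sub _ (le_of_lt hab), Finset.sum_range_sub, Finset.sum_range_sub]
        ring
      rw [hDb, Finset.mul_sum]
      rw [show Finset.Ico a b = (Finset.Ico j e).filter (fun c => a ≤ c ∧ c < b) by
        ext c
        simp only [Finset.mem_Ico, Finset.mem_filter]
        omega]
      rw [Finset.sum_filter]
    · rw [if_neg hab]
      symm
      apply Finset.sum_eq_zero
      intro c _
      rw [if_neg (fun h => hab (lt_of_le_of_lt h.1 h.2))]
  rw [Finset.sum_congr rfl fun a ha => Finset.sum_congr rfl fun b hb => step a ha b hb]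
  rw [Finset.sum_congr rfl fun a (_ : a ∈ I) => Finset.sum_comm, Finset.sum_comm]
  apply Finset.sum_congr rfl
  intro c hc
  rw [Finset.mem_Ico] at hc
  have hpt : ∀ a ∈ I, ∀ b ∈ I,
      (if a ≤ c ∧ c < b then B a * B b * (D (c + 1) - D c) else 0)
        = ((if a ≤ c then B a else 0) * (if c < b then B b else 0)) * (D (c + 1) - D c) := by
    intro a _ b _
    by_cases h1 : a ≤ c <;> by_cases h2 : c < b <;> simp [h1, h2]
  rw [Finset.sum_congr rfl fun a ha => Finset.sum_congr rfl fun b hb => hpt a ha b hb]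
  have hrow : ∀ a ∈ I,
      ∑ b ∈ I, ((if a ≤ c then B a else 0) * (if c < b then B b else 0)) * (D (c + 1) - D c)
        = (∑ b ∈ I, (if a ≤ c then B a else 0) * (if c < b then B b else 0)) * (D (c + 1) - D c) :=
    fun a _ => (Finset.sum_mul _ _ _).symm
  rw [Finset.sum_congr rfl hrow, ← Finset.sum_mul, ← Finset.sum_mul_sum]
  have e1 : (∑ a ∈ I, if a ≤ c then B a else 0) = ∑ a ∈ Finset.Icc j c, B a := by
    rw [← Finset.sum_filter]
    congr 1
    ext a
    simp only [Finset.mem_filter, hI, Finset.mem_Icc]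
    omega
  have e2 : (∑ b ∈ I, if c < b then B b else 0) = ∑ b ∈ Finset.Icc (c + 1) e, B b := by
    rw [← Finset.sum_filter]
    congr 1
    ext b
    simp only [Finset.mem_filter, hI, Finset.mem_Icc]
    omega
  rw [e1, e2]
  ring

lemma min_at_ends (f : ℕ → ℝ) (P : ℕ → Prop) (M : ℕ)
    (hmono : ∀ i, P i → P (i + 1))
    (hdec : ∀ i, 1 ≤ i → i + 1 ≤ M → P i → f (i + 1) ≤ f i)
    (hinc : ∀ i, 1 ≤ i → i + 1 ≤ M → ¬P i → f i ≤ f (i + 1)) :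
    ∀ j, 1 ≤ j → j ≤ M → min (f 1) (f M) ≤ f j := by
  intro j hj1 hjM
  by_cases hex : ∃ i, 1 ≤ i ∧ i < j ∧ P i
  · obtain ⟨i, hi1, hij, hPi⟩ := hex
    have hPall : ∀ c, i ≤ c → P c := by
      intro c hc
      have haux : ∀ t, P (i + t) := by
        intro t
        induction t with
        | zero => simpa using hPi
        | succ t ih => exact hmono _ ih
      have := haux (c - i)
      rwa [show i + (c - i) = c by omega] at this
    have hdown : ∀ t, j + t ≤ M → f (j + t) ≤ f j := by
      intro t
      induction t with
      | zero => intro _; simp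
      | succ t ih =>
        intro hle
        have h1 : f (j + t + 1) ≤ f (j + t) :=
          hdec (j + t) (by omega) (by omega) (hPall _ (by omega))
        have h2 := ih (by omega)
        have : j + (t + 1) = j + t + 1 := rfl
        rw [this]
        linarith
    have := hdown (M - j) (by omega)
    rw [show j + (M - j) = M by omega] at this
    exact le_trans (min_le_right _ _) this
  · push_neg at hex
    have hup : ∀ t, 1 + t ≤ j → f 1 ≤ f (1 + t) := by
      intro t
      induction t with
      | zero => intro _; simp
      | succ t ih =>
        intro hle
        have h1 : f (1 + t) ≤ f (1 + t + 1) :=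
          hinc (1 + t) (by omega) (by omega) (hex (1 + t) (by omega) (by omega))
        have h2 := ih (by omega)
        have : 1 + (t + 1) = 1 + t + 1 := rfl
        rw [this]
        linarith
    have := hup (j - 1) (by omega)
    rw [show 1 + (j - 1) = j by omega] at this
    exact le_trans (min_le_left _ _) this

end PureLemmas

namespace WeightedTree

variable {V : Type*} [Fintype V] [DecidableEq V] (T : WeightedTree V)
variable {x y : V} {W : T.G.Walk x y} {m : ℕ} {p : ℕ → V}

lemma seg_sum {j e : ℕ} (hje : j ≤ e) (f : V → ℝ) :
    ((seg p j e).map f).sum = ∑ a ∈ Finset.Icc j e, f (p a) := by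
  unfold seg
  rw [List.map_map, list_range_map_sum, ← Finset.Ico_add_one_right_eq_Icc, Finset.sum_Ico_eq_sum_range]
  rfl

lemma sbar_formula (hW : W.IsPath)
    (hsupp : W.support = (List.range m).map (fun j => p (j + 1)))
    (g : V → ℕ) (hg1 : ∀ v, 1 ≤ g v) (hgm : ∀ v, g v ≤ m)
    (hg : ∀ v a, 1 ≤ a → a ≤ m → T.d v (p a) = T.d v (p (g v)) + T.d (p (g v)) (p a))
    {j e : ℕ} (hj1 : 1 ≤ j) (hje : j < e) (hem : e ≤ m) :
    T.Sbar (seg p j e) = (2 / T.vt) * ∑ c ∈ Finset.Ico j e,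
      (T.d x (p (c + 1)) - T.d x (p c)) *
      ((∑ v ∈ Finset.univ.filter (fun v => g v ≤ c), T.w v) *
       (T.wT - ∑ v ∈ Finset.univ.filter (fun v => g v ≤ c), T.w v)) := by
  have hjem : j ≤ e := le_of_lt hje
  set l := seg p j e with hl
  have hclosest : ∀ v, T.closest l v = p (max j (min (g v) e)) := fun v =>
    T.closest_seg hW hsupp v hj1 hjem hem (hg1 v) (hgm v) (fun a ha1 ham => hg v a ha1 ham)
  set B : ℕ → ℝ :=
    fun a => ∑ v ∈ Finset.univ.filter (fun v => max j (min (g v) e) = a), T.w v with hB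
  have hbranch : ∀ a, j ≤ a → a ≤ e → T.wBranch l (p a) = B a := by
    intro a hja hae
    rw [wBranch, hB]
    congr 1
    apply Finset.filter_congr
    intro v _
    rw [hclosest v]
    constructor
    · intro h
      exact T.p_injOn hW hsupp (by omega) (by omega) (by omega) (by omega) h
    · intro h
      rw [h]
  have hdbar : ∀ a, j ≤ a → a ≤ e →
      T.dbar l (p a) = ∑ i ∈ Finset.Icc j e, B i * |T.d x (p a) - T.d x (p i)| := by
    intro a hja hae
    rw [dbar, hl, seg_sum hjem]
    apply Finset.sum_congr rfl
    intro i hi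
    rw [Finset.mem_Icc] at hi
    rw [hbranch i hi.1 hi.2, T.d_abs hW hsupp (by omega) (by omega) (by omega) (by omega)]
  have hSb : T.Sbar l = ∑ a ∈ Finset.Icc j e, B a * ((1 / T.vt) * T.dbar l (p a)) := by
    rw [Sbar]
    rw [← Finset.sum_fiberwise_of_maps_to
      (g := fun v => max j (min (g v) e)) (t := Finset.Icc j e)
      (fun v _ => by simp only [Finset.mem_Icc]; omega)
      (fun v => T.w v * T.s l v)]
    apply Finset.sum_congr rfl
    intro a ha
    have : ∀ v ∈ Finset.univ.filter (fun v => max j (min (g v) e) = a),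
        T.w v * T.s l v = T.w v * ((1 / T.vt) * T.dbar l (p a)) := by
      intro v hv
      rw [Finset.mem_filter] at hv
      rw [s, sOn, hclosest v, hv.2]
    rw [Finset.sum_congr rfl this, ← Finset.sum_mul]
  have hmono' : ∀ a b, j ≤ a → a ≤ b → b ≤ e → T.d x (p a) ≤ T.d x (p b) := by
    intro a b h1 h2 h3
    exact T.D_mono hW hsupp (by omega) h2 (by omega)
  have hdouble : T.Sbar l = (1 / T.vt) *
      ∑ a ∈ Finset.Icc j e, ∑ b ∈ Finset.Icc j e,
        B a * B b * |T.d x (p a) - T.d x (p b)| := by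
    rw [hSb, Finset.mul_sum]
    apply Finset.sum_congr rfl
    intro a ha
    rw [Finset.mem_Icc] at ha
    rw [hdbar a ha.1 ha.2, Finset.mul_sum, Finset.mul_sum, Finset.mul_sum]
    apply Finset.sum_congr rfl
    intro b _
    ring
  rw [hdouble, cut_identity B (fun a => T.d x (p a)) hjem hmono']
  have hpartial : ∀ c ∈ Finset.Ico j e,
      (∑ a ∈ Finset.Icc j c, B a)
        = ∑ v ∈ Finset.univ.filter (fun v => g v ≤ c), T.w v := by
    intro c hc
    rw [Finset.mem_Ico] at hc
    rw [hB]
    rw [Finset.sum_fiberwise_eq_sum_filter]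
    congr 1
    apply Finset.filter_congr
    intro v _
    rw [Finset.mem_Icc]
    constructor <;> (intro h; omega)
  have hpartial2 : ∀ c ∈ Finset.Ico j e,
      (∑ b ∈ Finset.Icc (c + 1) e, B b)
        = T.wT - ∑ v ∈ Finset.univ.filter (fun v => g v ≤ c), T.w v := by
    intro c hc
    rw [Finset.mem_Ico] at hc
    rw [hB]
    rw [Finset.sum_fiberwise_eq_sum_filter]
    have hcompl : Finset.univ.filter (fun v => max j (min (g v) e) ∈ Finset.Icc (c + 1) e)
        = Finset.univ.filter (fun v => ¬ g v ≤ c) := by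
      apply Finset.filter_congr
      intro v _
      rw [Finset.mem_Icc]
      constructor <;> (intro h; omega)
    rw [hcompl]
    have := Finset.sum_filter_add_sum_filter_not Finset.univ (fun v => g v ≤ c) T.w
    rw [wT]
    linarith
  have hfin : ∑ c ∈ Finset.Ico j e,
      (T.d x (p (c + 1)) - T.d x (p c)) *
        ((∑ a ∈ Finset.Icc j c, B a) * (∑ b ∈ Finset.Icc (c + 1) e, B b))
      = ∑ c ∈ Finset.Ico j e,
      (T.d x (p (c + 1)) - T.d x (p c)) *
        ((∑ v ∈ Finset.univ.filter (fun v => g v ≤ c), T.w v) *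
         (T.wT - ∑ v ∈ Finset.univ.filter (fun v => g v ≤ c), T.w v)) := by
    apply Finset.sum_congr rfl
    intro c hc
    rw [hpartial c hc, hpartial2 c hc]
  rw [hfin]
  ring

end WeightedTree

/-- the minimum of the mean service time `S̄` over all positions of a
fixed-length subpath of `p(1), …, p(m)` is attained at one of the two extreme
positions. -/
theorem sbar_shift_min_at_ends {V : Type*} [Fintype V] [DecidableEq V]
    (T : WeightedTree V) {x y : V} (W : T.G.Walk x y) (hW : W.IsPath)
    (m k : ℕ) (hk : 2 ≤ k) (hkm : k ≤ m) (p : ℕ → V)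
    (hsupp : W.support = (List.range m).map (fun j => p (j + 1)))
    (hwpos : ∀ v, 0 < T.w v) (l : ℝ)
    (hlen : ∀ j ∈ Finset.Icc 1 (m - k + 1), T.d (p j) (p (j + k - 1)) = l) :
    (Finset.Icc 1 (m - k + 1)).inf' (Finset.nonempty_Icc.mpr (by omega))
        (fun j => T.Sbar (seg p j (j + k - 1))) =
      min (T.Sbar (seg p 1 k)) (T.Sbar (seg p (m - k + 1) m)) := by
  classical
  set M := m - k + 1 with hM
  have hM1 : 1 ≤ M := by omega
  have hgate := fun v => T.exists_gate_idx hW hsupp v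
  choose g hg1 hgm hg using hgate
  set C : ℕ → ℝ := fun c => ∑ v ∈ Finset.univ.filter (fun v => g v ≤ c), T.w v with hC
  set f : ℕ → ℝ := fun j => T.Sbar (seg p j (j + k - 1)) with hf
  have hform : ∀ j, 1 ≤ j → j ≤ M → f j = (2 / T.vt) *
      ∑ c ∈ Finset.Ico j (j + k - 1),
        (T.d x (p (c + 1)) - T.d x (p c)) * (C c * (T.wT - C c)) := by
    intro j h1 h2
    exact T.sbar_formula hW hsupp g hg1 hgm hg h1 (by omega) (by omega)
  have hwin : ∀ j, 1 ≤ j → j ≤ M → T.d x (p (j + k - 1)) - T.d x (p j) = l := by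
    intro j h1 h2
    have hl1 := hlen j (Finset.mem_Icc.mpr ⟨h1, h2⟩)
    have hsub := T.d_eq_sub hW hsupp h1 (by omega : j ≤ j + k - 1) (by omega)
    linarith
  have hdelta : ∀ j, 1 ≤ j → j + 1 ≤ M →
      T.d x (p (j + k)) - T.d x (p (j + k - 1)) = T.d x (p (j + 1)) - T.d x (p j) := by
    intro j h1 h2
    have hA := hwin j h1 (by omega)
    have hB := hwin (j + 1) (by omega) h2
    rw [show j + 1 + k - 1 = j + k by omega] at hB
    linarith
  have hCmono : ∀ c c', c ≤ c' → C c ≤ C c' := by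
    intro c c' hcc
    apply Finset.sum_le_sum_of_subset_of_nonneg
    · intro v hv
      simp only [Finset.mem_filter] at *
      exact ⟨hv.1, by omega⟩
    · intro v _ _
      exact T.w_nonneg v
  have hC0 : ∀ c, 0 ≤ C c := fun c => Finset.sum_nonneg fun v _ => T.w_nonneg v
  have hCW : ∀ c, C c ≤ T.wT :=
    fun c => Finset.sum_le_sum_of_subset_of_nonneg (Finset.filter_subset _ _)
      (fun v _ _ => T.w_nonneg v)
  have hdnn : ∀ c, 1 ≤ c → c + 1 ≤ m → 0 ≤ T.d x (p (c + 1)) - T.d x (p c) := by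
    intro c h1 h2
    have := T.D_mono hW hsupp h1 (Nat.le_succ c) h2
    linarith
  set P : ℕ → Prop := fun j => T.wT ≤ C j + C (j + k - 1) with hP
  have hmonoP : ∀ i, P i → P (i + 1) := by
    intro i hi
    have h1 := hCmono i (i + 1) (by omega)
    have h2 := hCmono (i + k - 1) (i + 1 + k - 1) (by omega)
    simp only [hP] at *
    linarith
  have hdiffeq : ∀ i, 1 ≤ i → i + 1 ≤ M → f (i + 1) - f i =
      (2 / T.vt) * ((T.d x (p (i + 1)) - T.d x (p i)) *
        ((C (i + k - 1) * (T.wT - C (i + k - 1))) - C i * (T.wT - C i))) := by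
    intro i h1 h2
    rw [hform i h1 (by omega), hform (i + 1) (by omega) h2]
    rw [show i + 1 + k - 1 = i + k by omega]
    rw [show (Finset.Ico (i + 1) (i + k)) = Finset.Ico (i + 1) ((i + k - 1) + 1) by
      congr 1; omega]
    rw [Finset.sum_Ico_succ_top (by omega : i + 1 ≤ i + k - 1)]
    rw [Finset.sum_eq_sum_Ico_succ_bot (by omega : i < i + k - 1)]
    rw [show (i + k - 1) + 1 = i + k by omega]
    rw [hdelta i h1 h2]
    ring
  have hdec : ∀ i, 1 ≤ i → i + 1 ≤ M → P i → f (i + 1) ≤ f i := by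
    intro i h1 h2 hPi
    have heq := hdiffeq i h1 h2
    have hδ := hdnn i h1 (by omega)
    have hφ : (C (i + k - 1) * (T.wT - C (i + k - 1))) - C i * (T.wT - C i) ≤ 0 := by
      have hfac : (C (i + k - 1) * (T.wT - C (i + k - 1))) - C i * (T.wT - C i)
          = (C (i + k - 1) - C i) * (T.wT - C i - C (i + k - 1)) := by ring
      rw [hfac]
      apply mul_nonpos_of_nonneg_of_nonpos
      · have := hCmono i (i + k - 1) (by omega)
        linarith
      · simp only [hP] at hPi
        linarith
    have hvt : 0 ≤ 2 / T.vt := div_nonneg (by norm_num) (le_of_lt T.vt_pos)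
    have hstep := mul_nonpos_of_nonneg_of_nonpos hδ hφ
    have := mul_nonpos_of_nonneg_of_nonpos hvt hstep
    linarith
  have hinc : ∀ i, 1 ≤ i → i + 1 ≤ M → ¬ P i → f i ≤ f (i + 1) := by
    intro i h1 h2 hPi
    have heq := hdiffeq i h1 h2
    have hδ := hdnn i h1 (by omega)
    have hφ : 0 ≤ (C (i + k - 1) * (T.wT - C (i + k - 1))) - C i * (T.wT - C i) := by
      have hfac : (C (i + k - 1) * (T.wT - C (i + k - 1))) - C i * (T.wT - C i)
          = (C (i + k - 1) - C i) * (T.wT - C i - C (i + k - 1)) := by ring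
      rw [hfac]
      apply mul_nonneg
      · have := hCmono i (i + k - 1) (by omega)
        linarith
      · simp only [hP, not_le] at hPi
        linarith
    have hvt : 0 ≤ 2 / T.vt := div_nonneg (by norm_num) (le_of_lt T.vt_pos)
    have hstep := mul_nonneg hδ hφ
    have := mul_nonneg hvt hstep
    linarith
  have hmain := min_at_ends f P M hmonoP hdec hinc
  have hend1 : f 1 = T.Sbar (seg p 1 k) := by
    simp only [hf]
    rw [show 1 + k - 1 = k by omega]
  have hend2 : f M = T.Sbar (seg p M m) := by
    simp only [hf]
    rw [show M + k - 1 = m by omega]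
  apply le_antisymm
  · apply le_min
    · rw [← hend1]
      exact Finset.inf'_le _ (Finset.mem_Icc.mpr ⟨le_refl 1, hM1⟩)
    · rw [← hend2]
      exact Finset.inf'_le _ (Finset.mem_Icc.mpr ⟨hM1, le_refl M⟩)
  · apply Finset.le_inf'
    intro j hj
    rw [Finset.mem_Icc] at hj
    have := hmain j hj.1 hj.2
    rw [hend1, hend2] at this
    exact this
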